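/- arXiv:2501.00155 — 3 statements merged into one kernel-verified Lean document; each statement's English description precedes it below -/
import Mathlib

section
/- Let u : ℝ² → ℝ be a C² solution of the heat equation u_t = u_xx on all of ℝ², and let ε ∈ ℝ. Then the function (x,t) ↦ (1 + 4εt)^{-1/2} · exp(-εx²/(1 + 4εt)) · u(x/(1 + 4εt), t/(1 + 4εt)) is a C² solution of the heat equation on the open set {(x,t) ∈ ℝ² : 1 + 4εt > 0}. -/
noncomputable def pdx (f : ℝ → ℝ → ℝ) (x t : ℝ) : ℝ := deriv (fun z => f z t) x
noncomputable def pdt (f : ℝ → ℝ → ℝ) (x t : ℝ) : ℝ := deriv (fun s => f x s) t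
noncomputable def pdxx (f : ℝ → ℝ → ℝ) (x t : ℝ) : ℝ := deriv (fun z => pdx f z t) x

noncomputable def D1 (u : ℝ → ℝ → ℝ) (x t : ℝ) : ℝ :=
  fderiv ℝ (fun p : ℝ × ℝ => u p.1 p.2) (x, t) (1, 0)
noncomputable def D2 (u : ℝ → ℝ → ℝ) (x t : ℝ) : ℝ :=
  fderiv ℝ (fun p : ℝ × ℝ => u p.1 p.2) (x, t) (0, 1)
noncomputable def D11 (u : ℝ → ℝ → ℝ) (x t : ℝ) : ℝ :=
  fderiv ℝ (fun p : ℝ × ℝ => D1 u p.1 p.2) (x, t) (1, 0)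

/-- chain rule for a curve composed with a two-variable function -/
lemma hasDerivAt_comp2 {F : ℝ × ℝ → ℝ} (hF : Differentiable ℝ F)
    {g h : ℝ → ℝ} {g' h' : ℝ} {s : ℝ} (hg : HasDerivAt g g' s) (hh : HasDerivAt h h' s) :
    HasDerivAt (fun s => F (g s, h s))
      (g' * fderiv ℝ F (g s, h s) (1, 0) + h' * fderiv ℝ F (g s, h s) (0, 1)) s := by
  have := ((hF (g s, h s)).hasFDerivAt).comp_hasDerivAt s (hg.prodMk hh)
  refine this.congr_deriv ?_
  have : ((g' : ℝ), (h' : ℝ)) = g' • ((1:ℝ), (0:ℝ)) + h' • ((0:ℝ), (1:ℝ)) := by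
    simp [Prod.ext_iff]
  rw [this, map_add, map_smul, map_smul]
  simp [smul_eq_mul]

section aux
variable {u : ℝ → ℝ → ℝ} (hu : ContDiff ℝ 2 (fun p : ℝ × ℝ => u p.1 p.2))
include hu

lemma hUdiff : Differentiable ℝ (fun p : ℝ × ℝ => u p.1 p.2) :=
  hu.differentiable (by norm_num)

lemma hasDerivAt_x (x t : ℝ) : HasDerivAt (fun z => u z t) (D1 u x t) x := by
  have := hasDerivAt_comp2 (hUdiff hu) (hasDerivAt_id x) (hasDerivAt_const x t)
  simpa [D1] using this

lemma hasDerivAt_t (x t : ℝ) : HasDerivAt (fun s => u x s) (D2 u x t) t := by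
  have := hasDerivAt_comp2 (hUdiff hu) (hasDerivAt_const t x) (hasDerivAt_id t)
  simpa [D2] using this

lemma hD1contDiff : ContDiff ℝ 1 (fun p : ℝ × ℝ => D1 u p.1 p.2) := by
  have h1 : ContDiff ℝ 1 (fderiv ℝ (fun p : ℝ × ℝ => u p.1 p.2)) :=
    hu.fderiv_right (by norm_num)
  have h2 : ContDiff ℝ 1 (fun L : (ℝ × ℝ) →L[ℝ] ℝ => L (1, 0)) :=
    (ContinuousLinearMap.apply ℝ ℝ ((1:ℝ), (0:ℝ))).contDiff
  exact (h2.comp h1 : _)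

lemma hD1diff : Differentiable ℝ (fun p : ℝ × ℝ => D1 u p.1 p.2) :=
  (hD1contDiff hu).differentiable (by norm_num)

lemma hasDerivAt_xx (x t : ℝ) : HasDerivAt (fun z => D1 u z t) (D11 u x t) x := by
  have := hasDerivAt_comp2 (hD1diff hu) (hasDerivAt_id x) (hasDerivAt_const x t)
  simpa [D11] using this

lemma pdx_eq (x t : ℝ) : pdx u x t = D1 u x t := (hasDerivAt_x hu x t).deriv
lemma pdt_eq (x t : ℝ) : pdt u x t = D2 u x t := (hasDerivAt_t hu x t).deriv
lemma pdxx_eq (x t : ℝ) : pdxx u x t = D11 u x t := by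
  unfold pdxx
  have : (fun z => pdx u z t) = fun z => D1 u z t := funext fun z => pdx_eq hu z t
  rw [this]
  exact (hasDerivAt_xx hu x t).deriv

end aux

/-- Symmetry `v₆` of the heat equation: if `u` is a C² solution of `u_t = u_xx` on all of
`ℝ²`, then `(x,t) ↦ (1+4εt)^{-1/2} · exp(-εx²/(1+4εt)) · u(x/(1+4εt), t/(1+4εt))` is a C²
solution of the heat equation on the open set `{(x,t) : 1 + 4εt > 0}`. -/
theorem heat_projective_symmetry (u : ℝ → ℝ → ℝ)
    (hu : ContDiff ℝ 2 (fun p : ℝ × ℝ => u p.1 p.2))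
    (heq : ∀ x t : ℝ, pdt u x t = pdxx u x t) (ε : ℝ) :
    ContDiffOn ℝ 2
      (fun p : ℝ × ℝ =>
        (1 + 4 * ε * p.2) ^ (-(1 : ℝ) / 2) * Real.exp (-ε * p.1 ^ 2 / (1 + 4 * ε * p.2)) *
          u (p.1 / (1 + 4 * ε * p.2)) (p.2 / (1 + 4 * ε * p.2)))
      {p : ℝ × ℝ | 1 + 4 * ε * p.2 > 0} ∧
    ∀ x t : ℝ, 1 + 4 * ε * t > 0 →
      pdt (fun x t => (1 + 4 * ε * t) ^ (-(1 : ℝ) / 2) *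
        Real.exp (-ε * x ^ 2 / (1 + 4 * ε * t)) *
        u (x / (1 + 4 * ε * t)) (t / (1 + 4 * ε * t))) x t =
      pdxx (fun x t => (1 + 4 * ε * t) ^ (-(1 : ℝ) / 2) *
        Real.exp (-ε * x ^ 2 / (1 + 4 * ε * t)) *
        u (x / (1 + 4 * ε * t)) (t / (1 + 4 * ε * t))) x t := by
  constructor
  · -- smoothness
    have hs : ∀ p : ℝ × ℝ, p ∈ {p : ℝ × ℝ | 1 + 4 * ε * p.2 > 0} → (1 + 4 * ε * p.2) ≠ 0 :=
      fun p hp => ne_of_gt hp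
    have hN : ContDiffOn ℝ 2 (fun p : ℝ × ℝ => 1 + 4 * ε * p.2)
        {p : ℝ × ℝ | 1 + 4 * ε * p.2 > 0} :=
      (contDiff_const.add (contDiff_const.mul contDiff_snd)).contDiffOn
    have f1 : ContDiffOn ℝ 2 (fun p : ℝ × ℝ => (1 + 4 * ε * p.2) ^ (-(1 : ℝ) / 2))
        {p : ℝ × ℝ | 1 + 4 * ε * p.2 > 0} := by
      intro p hp
      exact ((Real.contDiffAt_rpow_const_of_ne (hs p hp)).comp p
        (hN.contDiffAt (IsOpen.mem_nhds (isOpen_lt continuous_const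
          (continuous_const.add (continuous_const.mul continuous_snd))) hp))).contDiffWithinAt
    have f2 : ContDiffOn ℝ 2 (fun p : ℝ × ℝ => Real.exp (-ε * p.1 ^ 2 / (1 + 4 * ε * p.2)))
        {p : ℝ × ℝ | 1 + 4 * ε * p.2 > 0} := by
      apply (Real.contDiff_exp (n := 2)).comp_contDiffOn
      exact ((contDiff_const.mul (contDiff_fst.pow 2)).contDiffOn).div hN hs
    have f3 : ContDiffOn ℝ 2
        (fun p : ℝ × ℝ => u (p.1 / (1 + 4 * ε * p.2)) (p.2 / (1 + 4 * ε * p.2)))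
        {p : ℝ × ℝ | 1 + 4 * ε * p.2 > 0} := by
      have hg : ContDiffOn ℝ 2
          (fun p : ℝ × ℝ => (p.1 / (1 + 4 * ε * p.2), p.2 / (1 + 4 * ε * p.2)))
          {p : ℝ × ℝ | 1 + 4 * ε * p.2 > 0} :=
        ((contDiff_fst.contDiffOn).div hN hs).prodMk ((contDiff_snd.contDiffOn).div hN hs)
      exact hu.comp_contDiffOn hg
    exact (f1.mul f2).mul f3
  · intro x t ht
    have hA : (1 + 4 * ε * t) ≠ 0 := ne_of_gt ht
    set A : ℝ := 1 + 4 * ε * t with hAdef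
    set X : ℝ := x / A with hX
    set T : ℝ := t / A with hT
    set c : ℝ := A ^ (-(1:ℝ)/2) with hc
    -- derivative in x of the exponential factor
    have he : ∀ z : ℝ, HasDerivAt (fun z => Real.exp (-ε * z ^ 2 / A))
        (Real.exp (-ε * z ^ 2 / A) * (-2 * ε * z / A)) z := by
      intro z
      have h0 : HasDerivAt (fun z : ℝ => -ε * z ^ 2 / A) (-2 * ε * z / A) z := by
        have := ((hasDerivAt_pow 2 z).const_mul (-ε)).div_const A
        refine this.congr_deriv ?_
        simp; ring
      exact h0.exp
    -- derivative in x of the u-factor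
    have hw : ∀ z : ℝ, HasDerivAt (fun z => u (z / A) (T))
        ((1 / A) * D1 u (z / A) T) z := by
      intro z
      have h2 : HasDerivAt (fun z : ℝ => z / A) (1 / A) z := (hasDerivAt_id z).div_const A
      have := (hasDerivAt_x hu (z / A) T).comp z h2
      refine this.congr_deriv ?_
      ring
    -- derivative in x of D1-factor
    have hw1 : ∀ z : ℝ, HasDerivAt (fun z => D1 u (z / A) (T))
        ((1 / A) * D11 u (z / A) T) z := by
      intro z
      have h2 : HasDerivAt (fun z : ℝ => z / A) (1 / A) z := (hasDerivAt_id z).div_const A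
      have := (hasDerivAt_xx hu (z / A) T).comp z h2
      refine this.congr_deriv ?_
      ring
    -- first x-derivative of v
    have hvx : ∀ z : ℝ, HasDerivAt
        (fun z => A ^ (-(1:ℝ)/2) * Real.exp (-ε * z ^ 2 / A) * u (z / A) (t / A))
        (c * Real.exp (-ε * z ^ 2 / A) * (-2 * ε * z / A) * u (z / A) T
          + c * Real.exp (-ε * z ^ 2 / A) * (1 / A) * D1 u (z / A) T) z := by
      intro z
      have h1 := ((he z).const_mul c).mul (hw z)
      have hTt : t / A = T := rfl
      rw [hTt]
      refine h1.congr_deriv ?_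
      ring
    have hpdx : ∀ z : ℝ, pdx (fun x t => (1 + 4 * ε * t) ^ (-(1 : ℝ) / 2) *
        Real.exp (-ε * x ^ 2 / (1 + 4 * ε * t)) *
        u (x / (1 + 4 * ε * t)) (t / (1 + 4 * ε * t))) z t
        = c * Real.exp (-ε * z ^ 2 / A) * (-2 * ε * z / A) * u (z / A) T
          + c * Real.exp (-ε * z ^ 2 / A) * (1 / A) * D1 u (z / A) T := by
      intro z
      exact (hvx z).deriv
    -- second x-derivative
    have hvxx : pdxx (fun x t => (1 + 4 * ε * t) ^ (-(1 : ℝ) / 2) *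
        Real.exp (-ε * x ^ 2 / (1 + 4 * ε * t)) *
        u (x / (1 + 4 * ε * t)) (t / (1 + 4 * ε * t))) x t
        = c * Real.exp (-ε * x ^ 2 / A) *
            ((4 * ε^2 * x^2 / A^2 - 2 * ε / A) * u X T
              - 4 * ε * x / A^2 * D1 u X T + 1 / A^2 * D11 u X T) := by
      unfold pdxx
      rw [funext hpdx]
      have hE : HasDerivAt (fun z => c * Real.exp (-ε * z ^ 2 / A))
          (c * (Real.exp (-ε * x ^ 2 / A) * (-2 * ε * x / A))) x := (he x).const_mul c
      have hlin : HasDerivAt (fun z : ℝ => -2 * ε * z / A) (-2 * ε / A) x := by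
        have := ((hasDerivAt_id x).const_mul (-2 * ε)).div_const A
        refine this.congr_deriv ?_
        ring
      have t1 : HasDerivAt (fun z => c * Real.exp (-ε * z ^ 2 / A) * (-2 * ε * z / A)
            * u (z / A) T)
          ((c * (Real.exp (-ε * x ^ 2 / A) * (-2 * ε * x / A)) * (-2 * ε * x / A)
              + c * Real.exp (-ε * x ^ 2 / A) * (-2 * ε / A)) * u (x / A) T
            + c * Real.exp (-ε * x ^ 2 / A) * (-2 * ε * x / A)
              * ((1 / A) * D1 u (x / A) T)) x := (hE.mul hlin).mul (hw x)
      have t2 : HasDerivAt (fun z => c * Real.exp (-ε * z ^ 2 / A) * (1 / A)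
            * D1 u (z / A) T)
          (c * (Real.exp (-ε * x ^ 2 / A) * (-2 * ε * x / A)) * (1 / A) * D1 u (x / A) T
            + c * Real.exp (-ε * x ^ 2 / A) * (1 / A) * ((1 / A) * D11 u (x / A) T)) x :=
        (hE.mul_const (1 / A)).mul (hw1 x)
      have := (t1.add t2).deriv
      refine this.trans ?_
      have hXx : x / A = X := rfl
      rw [hXx]
      field_simp
      ring
    -- time derivative
    have hb : HasDerivAt (fun s : ℝ => 1 + 4 * ε * s) (4 * ε) t := by
      have := ((hasDerivAt_id t).const_mul (4 * ε)).const_add 1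
      refine this.congr_deriv ?_
      ring
    have hr : HasDerivAt (fun s : ℝ => (1 + 4 * ε * s) ^ (-(1:ℝ)/2))
        (4 * ε * (-(1:ℝ)/2) * A ^ (-(1:ℝ)/2 - 1)) t := by
      have := hb.rpow_const (p := -(1:ℝ)/2) (Or.inl hA)
      convert this using 2
    have hgexp : HasDerivAt (fun s : ℝ => Real.exp (-ε * x ^ 2 / (1 + 4 * ε * s)))
        (Real.exp (-ε * x ^ 2 / A) * ((0 * A - -ε * x ^ 2 * (4 * ε)) / A ^ 2)) t := by
      have h0 : HasDerivAt (fun s : ℝ => -ε * x ^ 2 / (1 + 4 * ε * s))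
          ((0 * A - -ε * x ^ 2 * (4 * ε)) / A ^ 2) t :=
        (hasDerivAt_const t (-ε * x ^ 2)).div hb hA
      exact h0.exp
    have hg1 : HasDerivAt (fun s : ℝ => x / (1 + 4 * ε * s))
        ((0 * A - x * (4 * ε)) / A ^ 2) t := (hasDerivAt_const t x).div hb hA
    have hg2 : HasDerivAt (fun s : ℝ => s / (1 + 4 * ε * s))
        ((1 * A - t * (4 * ε)) / A ^ 2) t := (hasDerivAt_id t).div hb hA
    have hucomp : HasDerivAt (fun s : ℝ => u (x / (1 + 4 * ε * s)) (s / (1 + 4 * ε * s)))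
        ((0 * A - x * (4 * ε)) / A ^ 2 * D1 u X T
          + (1 * A - t * (4 * ε)) / A ^ 2 * D2 u X T) t := by
      have := hasDerivAt_comp2 (hUdiff hu) hg1 hg2
      exact this
    have hvt : pdt (fun x t => (1 + 4 * ε * t) ^ (-(1 : ℝ) / 2) *
        Real.exp (-ε * x ^ 2 / (1 + 4 * ε * t)) *
        u (x / (1 + 4 * ε * t)) (t / (1 + 4 * ε * t))) x t
        = c * Real.exp (-ε * x ^ 2 / A) *
            ((4 * ε^2 * x^2 / A^2 - 2 * ε / A) * u X T
              - 4 * ε * x / A^2 * D1 u X T + 1 / A^2 * D2 u X T) := by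
      unfold pdt
      have := ((hr.mul hgexp).mul hucomp).deriv
      refine this.trans ?_
      simp only [Pi.mul_apply, ← hAdef, ← hX, ← hT, ← hc]
      rw [Real.rpow_sub_one hA, ← hc]
      field_simp
      rw [hAdef]
      ring
    rw [hvt, hvxx]
    have hheat : D2 u X T = D11 u X T := by
      rw [← pdt_eq hu, ← pdxx_eq hu]
      exact heq X T
    rw [hheat]
end

section
/- Assume a = 1/4 (with b, d, e ∈ ℝ arbitrary). Let u be a solution of the Longstaff–Schwartz equation on Ω, and let ε ∈ ℝ. Then the function w(x,y,t) = exp( (b·ε·e^{bt/2} · (4√x − ε·e^{bt/2}))/2 ) · u( (2√x − ε·e^{bt/2})²/4, y, t ) satisfies the Longstaff–Schwartz equation at every point (x,y,t) ∈ Ω with 2√x > ε·e^{bt/2}. -/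
/-- Partial derivative in `x`. -/
noncomputable def pdX (u : ℝ → ℝ → ℝ → ℝ) (x y t : ℝ) : ℝ := deriv (fun z => u z y t) x

/-- Partial derivative in `y`. -/
noncomputable def pdY (u : ℝ → ℝ → ℝ → ℝ) (x y t : ℝ) : ℝ := deriv (fun z => u x z t) y

/-- Partial derivative in `t`. -/
noncomputable def pdT (u : ℝ → ℝ → ℝ → ℝ) (x y t : ℝ) : ℝ := deriv (fun z => u x y z) t

/-- Second partial derivative in `x`. -/
noncomputable def pdXX (u : ℝ → ℝ → ℝ → ℝ) (x y t : ℝ) : ℝ := deriv (fun z => pdX u z y t) x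

/-- Second partial derivative in `y`. -/
noncomputable def pdYY (u : ℝ → ℝ → ℝ → ℝ) (x y t : ℝ) : ℝ := deriv (fun z => pdY u x z t) y

/-- The domain `Ω = {(x,y,t) : x > 0, y > 0}`. -/
def Omega : Set (ℝ × ℝ × ℝ) := {p | 0 < p.1 ∧ 0 < p.2.1}

/-- The Longstaff–Schwartz (Kolmogorov backward) equation
`u_t = −((a−bx)·u_x + (d−ey)·u_y + (x/2)·u_xx + (y/2)·u_yy)` holds at the point `(x,y,t)`. -/
def LSEq (a b d e : ℝ) (u : ℝ → ℝ → ℝ → ℝ) (x y t : ℝ) : Prop :=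
  pdT u x y t =
    -((a - b * x) * pdX u x y t + (d - e * y) * pdY u x y t +
      x / 2 * pdXX u x y t + y / 2 * pdYY u x y t)

/-- `u` is a solution of the Longstaff–Schwartz equation on `Ω`: it is C² on `Ω` and
satisfies the equation at every point of `Ω`. -/
def IsLSSolution (a b d e : ℝ) (u : ℝ → ℝ → ℝ → ℝ) : Prop :=
  ContDiffOn ℝ 2 (fun p : ℝ × ℝ × ℝ => u p.1 p.2.1 p.2.2) Omega ∧
  ∀ x y t : ℝ, 0 < x → 0 < y → LSEq a b d e u x y t


private lemma ls_open_Omega : IsOpen Omega :=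
  (isOpen_lt continuous_const continuous_fst).and
    (isOpen_lt continuous_const (continuous_fst.comp continuous_snd))

private lemma ls_comp_curve {U : ℝ×ℝ×ℝ → ℝ} {q : ℝ×ℝ×ℝ} (hU : DifferentiableAt ℝ U q)
    {γ : ℝ → ℝ×ℝ×ℝ} {γ' : ℝ×ℝ×ℝ} {z : ℝ} (hγ : HasDerivAt γ γ' z) (hqz : γ z = q) :
    HasDerivAt (fun w => U (γ w)) (fderiv ℝ U q γ') z :=
  (show HasFDerivAt U (fderiv ℝ U q) (γ z) from hqz ▸ hU.hasFDerivAt).comp_hasDerivAt z hγ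

private lemma ls_comp_curve2 {U : ℝ×ℝ×ℝ → ℝ} {q : ℝ×ℝ×ℝ}
    (hF : DifferentiableAt ℝ (fderiv ℝ U) q)
    {γ : ℝ → ℝ×ℝ×ℝ} {γ' : ℝ×ℝ×ℝ} {z : ℝ} (hγ : HasDerivAt γ γ' z) (hqz : γ z = q)
    (v : ℝ×ℝ×ℝ) :
    HasDerivAt (fun w => fderiv ℝ U (γ w) v) (fderiv ℝ (fderiv ℝ U) q γ' v) z := by
  have h1 : HasFDerivAt (fderiv ℝ U) (fderiv ℝ (fderiv ℝ U) q) (γ z) := hqz ▸ hF.hasFDerivAt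
  simpa [Function.comp_def] using ((ContinuousLinearMap.apply ℝ ℝ v).hasFDerivAt).comp_hasDerivAt z
    (h1.comp_hasDerivAt z hγ)

private lemma ls_lin1 (L : ℝ×ℝ×ℝ →L[ℝ] ℝ) (v : ℝ) :
    L (v, 0, 0) = v * L (1, 0, 0) := by
  have h : ((v,0,0) : ℝ×ℝ×ℝ) = v • ((1:ℝ),(0:ℝ),(0:ℝ)) := by simp [Prod.ext_iff]
  rw [h, map_smul, smul_eq_mul]

private lemma ls_lin1' (L : ℝ×ℝ×ℝ →L[ℝ] (ℝ×ℝ×ℝ →L[ℝ] ℝ)) (v : ℝ) (w : ℝ×ℝ×ℝ) :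
    L (v, 0, 0) w = v * L (1, 0, 0) w := by
  have h : ((v,0,0) : ℝ×ℝ×ℝ) = v • ((1:ℝ),(0:ℝ),(0:ℝ)) := by simp [Prod.ext_iff]
  rw [h, map_smul]
  simp

private lemma ls_lin2 (L : ℝ×ℝ×ℝ →L[ℝ] ℝ) (v : ℝ) :
    L (v, 0, 1) = v * L (1, 0, 0) + L (0, 0, 1) := by
  have h : ((v,0,1) : ℝ×ℝ×ℝ) = v • ((1:ℝ),(0:ℝ),(0:ℝ)) + ((0:ℝ),(0:ℝ),(1:ℝ)) := by
    simp [Prod.ext_iff]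
  rw [h, map_add, map_smul, smul_eq_mul]

set_option maxHeartbeats 1000000 in
/-- Symmetry of the Longstaff–Schwartz equation when `a = 1/4` (subcase 3.1, group `G₃`). -/
theorem ls_symmetry_a_quarter_exp (a b d e : ℝ) (ha : a = 1 / 4)
    (u : ℝ → ℝ → ℝ → ℝ) (hu : IsLSSolution a b d e u) (ε : ℝ) :
    ∀ x y t : ℝ, 0 < x → 0 < y → 2 * Real.sqrt x > ε * Real.exp (b * t / 2) →
      LSEq a b d e
        (fun x y t =>
          Real.exp (b * ε * Real.exp (b * t / 2) *
              (4 * Real.sqrt x - ε * Real.exp (b * t / 2)) / 2) *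
            u ((2 * Real.sqrt x - ε * Real.exp (b * t / 2)) ^ 2 / 4) y t)
        x y t := by
  subst ha
  obtain ⟨hC2, hpde⟩ := hu
  intro x y t hx hy hr
  obtain ⟨s, hs, rfl⟩ : ∃ s : ℝ, 0 < s ∧ s ^ 2 = x :=
    ⟨Real.sqrt x, Real.sqrt_pos.2 hx, Real.sq_sqrt hx.le⟩
  have hss : Real.sqrt (s ^ 2) = s := Real.sqrt_sq hs.le
  rw [hss] at hr
  have hrpos : (0:ℝ) < 2 * s - ε * Real.exp (b * t / 2) := sub_pos.2 hr
  have hX0pos : (0:ℝ) < ((2 * s - ε * Real.exp (b * t / 2)) ^ 2 / 4) := div_pos (pow_pos hrpos 2) (by norm_num)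
  have hqmem : ((((2 * s - ε * Real.exp (b * t / 2)) ^ 2 / 4), y, t) : ℝ×ℝ×ℝ) ∈ Omega := ⟨hX0pos, hy⟩
  have hdiffU : ∀ p ∈ Omega, DifferentiableAt ℝ (fun p : ℝ × ℝ × ℝ => u p.1 p.2.1 p.2.2) p := fun p hp =>
    (hC2.contDiffAt (ls_open_Omega.mem_nhds hp)).differentiableAt (by norm_num)
  have hdiffF : ∀ p ∈ Omega, DifferentiableAt ℝ (fderiv ℝ (fun p : ℝ × ℝ × ℝ => u p.1 p.2.1 p.2.2)) p := fun p hp =>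
    ((hC2.contDiffAt (ls_open_Omega.mem_nhds hp)).fderiv_right (m := 1)
      (by norm_num)).differentiableAt one_ne_zero
  -- conversion of the partial derivatives of `u` at the shifted point
  have hA : pdX u ((2 * s - ε * Real.exp (b * t / 2)) ^ 2 / 4) y t = (fderiv ℝ (fun p : ℝ × ℝ × ℝ => u p.1 p.2.1 p.2.2) (((2 * s - ε * Real.exp (b * t / 2)) ^ 2 / 4), y, t) ((1:ℝ),(0:ℝ),(0:ℝ))) :=
    (ls_comp_curve (hdiffU _ hqmem)
      ((hasDerivAt_id' ((2 * s - ε * Real.exp (b * t / 2)) ^ 2 / 4)).prodMk ((hasDerivAt_const ((2 * s - ε * Real.exp (b * t / 2)) ^ 2 / 4) y).prodMk (hasDerivAt_const ((2 * s - ε * Real.exp (b * t / 2)) ^ 2 / 4) t)))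
      rfl).deriv
  have hCt : pdT u ((2 * s - ε * Real.exp (b * t / 2)) ^ 2 / 4) y t = (fderiv ℝ (fun p : ℝ × ℝ × ℝ => u p.1 p.2.1 p.2.2) (((2 * s - ε * Real.exp (b * t / 2)) ^ 2 / 4), y, t) ((0:ℝ),(0:ℝ),(1:ℝ))) :=
    (ls_comp_curve (hdiffU _ hqmem)
      ((hasDerivAt_const t ((2 * s - ε * Real.exp (b * t / 2)) ^ 2 / 4)).prodMk ((hasDerivAt_const t y).prodMk (hasDerivAt_id' t)))
      rfl).deriv
  have hAxx : pdXX u ((2 * s - ε * Real.exp (b * t / 2)) ^ 2 / 4) y t = (fderiv ℝ (fderiv ℝ (fun p : ℝ × ℝ × ℝ => u p.1 p.2.1 p.2.2)) (((2 * s - ε * Real.exp (b * t / 2)) ^ 2 / 4), y, t) ((1:ℝ),(0:ℝ),(0:ℝ)) ((1:ℝ),(0:ℝ),(0:ℝ))) := by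
    have hev : (fun z => pdX u z y t) =ᶠ[nhds ((2 * s - ε * Real.exp (b * t / 2)) ^ 2 / 4)]
        (fun z => fderiv ℝ (fun p : ℝ × ℝ × ℝ => u p.1 p.2.1 p.2.2) (z, y, t) ((1:ℝ),(0:ℝ),(0:ℝ))) := by
      filter_upwards [(isOpen_lt continuous_const continuous_id).mem_nhds hX0pos] with z hz
      exact (ls_comp_curve (hdiffU _ ⟨hz, hy⟩)
        ((hasDerivAt_id' z).prodMk ((hasDerivAt_const z y).prodMk (hasDerivAt_const z t)))
        rfl).deriv
    simp only [pdXX]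
    rw [hev.deriv_eq]
    exact (ls_comp_curve2 (hdiffF _ hqmem)
      ((hasDerivAt_id' ((2 * s - ε * Real.exp (b * t / 2)) ^ 2 / 4)).prodMk ((hasDerivAt_const ((2 * s - ε * Real.exp (b * t / 2)) ^ 2 / 4) y).prodMk (hasDerivAt_const ((2 * s - ε * Real.exp (b * t / 2)) ^ 2 / 4) t)))
      rfl ((1:ℝ),(0:ℝ),(0:ℝ))).deriv
  have hPDE : (fderiv ℝ (fun p : ℝ × ℝ × ℝ => u p.1 p.2.1 p.2.2) (((2 * s - ε * Real.exp (b * t / 2)) ^ 2 / 4), y, t) ((0:ℝ),(0:ℝ),(1:ℝ))) = -((1 / 4 - b * ((2 * s - ε * Real.exp (b * t / 2)) ^ 2 / 4)) * (fderiv ℝ (fun p : ℝ × ℝ × ℝ => u p.1 p.2.1 p.2.2) (((2 * s - ε * Real.exp (b * t / 2)) ^ 2 / 4), y, t) ((1:ℝ),(0:ℝ),(0:ℝ))) + (d - e * y) * pdY u ((2 * s - ε * Real.exp (b * t / 2)) ^ 2 / 4) y t +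
      ((2 * s - ε * Real.exp (b * t / 2)) ^ 2 / 4) / 2 * (fderiv ℝ (fderiv ℝ (fun p : ℝ × ℝ × ℝ => u p.1 p.2.1 p.2.2)) (((2 * s - ε * Real.exp (b * t / 2)) ^ 2 / 4), y, t) ((1:ℝ),(0:ℝ),(0:ℝ)) ((1:ℝ),(0:ℝ),(0:ℝ))) + y / 2 * pdYY u ((2 * s - ε * Real.exp (b * t / 2)) ^ 2 / 4) y t) := by
    have h := hpde ((2 * s - ε * Real.exp (b * t / 2)) ^ 2 / 4) y t hX0pos hy
    simp only [LSEq] at h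
    rw [hA, hCt, hAxx] at h
    exact h
  -- the x-derivative of the transformed function, at any admissible point
  have hmain : ∀ z : ℝ, 0 < z → ε * Real.exp (b * t / 2) < 2 * Real.sqrt z →
      HasDerivAt (fun w => Real.exp (b * ε * Real.exp (b * t / 2) *
            (4 * Real.sqrt w - ε * Real.exp (b * t / 2)) / 2) *
          u ((2 * Real.sqrt w - ε * Real.exp (b * t / 2)) ^ 2 / 4) y t)
        (Real.exp (b * ε * Real.exp (b * t / 2) *
            (4 * Real.sqrt z - ε * Real.exp (b * t / 2)) / 2) *
          (b * ε * Real.exp (b * t / 2) / Real.sqrt z *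
              u ((2 * Real.sqrt z - ε * Real.exp (b * t / 2)) ^ 2 / 4) y t +
            (2 * Real.sqrt z - ε * Real.exp (b * t / 2)) / (2 * Real.sqrt z) *
              fderiv ℝ (fun p : ℝ × ℝ × ℝ => u p.1 p.2.1 p.2.2) (((2 * Real.sqrt z - ε * Real.exp (b * t / 2)) ^ 2 / 4), y, t)
                ((1:ℝ),(0:ℝ),(0:ℝ)))) z := by
    intro z hz hzr
    have hszpos : 0 < Real.sqrt z := Real.sqrt_pos.2 hz
    have hq : ((((2 * Real.sqrt z - ε * Real.exp (b * t / 2)) ^ 2 / 4), y, t) : ℝ×ℝ×ℝ) ∈ Omega :=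
      ⟨div_pos (pow_pos (sub_pos.2 hzr) 2) (by norm_num), hy⟩
    have h1 : HasDerivAt (fun w => b * ε * Real.exp (b * t / 2) *
        (4 * Real.sqrt w - ε * Real.exp (b * t / 2)) / 2)
        (b * ε * Real.exp (b * t / 2) / Real.sqrt z) z := by
      have h0 := ((((Real.hasDerivAt_sqrt hz.ne').const_mul 4).sub_const
        (ε * Real.exp (b * t / 2))).const_mul (b * ε * Real.exp (b * t / 2))).div_const 2
      refine h0.congr_deriv ?_
      field_simp
      ring
    have hphi : HasDerivAt (fun w => (2 * Real.sqrt w - ε * Real.exp (b * t / 2)) ^ 2 / 4)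
        ((2 * Real.sqrt z - ε * Real.exp (b * t / 2)) / (2 * Real.sqrt z)) z := by
      have h0 := ((((Real.hasDerivAt_sqrt hz.ne').const_mul 2).sub_const
        (ε * Real.exp (b * t / 2))).fun_pow 2).div_const 4
      refine h0.congr_deriv ?_
      field_simp
      ring
    have h3 := ls_comp_curve (hdiffU _ hq)
      (hphi.prodMk ((hasDerivAt_const z y).prodMk (hasDerivAt_const z t))) rfl
    rw [ls_lin1] at h3
    have h4 := h1.exp.fun_mul h3
    simp only [] at h4
    refine h4.congr_deriv ?_
    ring
  -- pdX of the transformed function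
  have hWx : pdX (fun x y t =>
          Real.exp (b * ε * Real.exp (b * t / 2) *
              (4 * Real.sqrt x - ε * Real.exp (b * t / 2)) / 2) *
            u ((2 * Real.sqrt x - ε * Real.exp (b * t / 2)) ^ 2 / 4) y t) (s ^ 2) y t =
      (Real.exp (b * ε * Real.exp (b * t / 2) * (4 * s - ε * Real.exp (b * t / 2)) / 2)) * (b * (ε * Real.exp (b * t / 2)) / s * (u ((2 * s - ε * Real.exp (b * t / 2)) ^ 2 / 4) y t) + (2 * s - (ε * Real.exp (b * t / 2))) / (2 * s) * (fderiv ℝ (fun p : ℝ × ℝ × ℝ => u p.1 p.2.1 p.2.2) (((2 * s - ε * Real.exp (b * t / 2)) ^ 2 / 4), y, t) ((1:ℝ),(0:ℝ),(0:ℝ)))) := by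
    have H := hmain (s ^ 2) (pow_pos hs 2) (by rw [hss]; exact hr)
    simp only [Real.sqrt_sq hs.le] at H
    simp only [pdX]
    convert H.deriv using 1
    ring
  -- pdY and pdYY
  have hWy : pdY (fun x y t =>
          Real.exp (b * ε * Real.exp (b * t / 2) *
              (4 * Real.sqrt x - ε * Real.exp (b * t / 2)) / 2) *
            u ((2 * Real.sqrt x - ε * Real.exp (b * t / 2)) ^ 2 / 4) y t) (s ^ 2) y t = (Real.exp (b * ε * Real.exp (b * t / 2) * (4 * s - ε * Real.exp (b * t / 2)) / 2)) * pdY u ((2 * s - ε * Real.exp (b * t / 2)) ^ 2 / 4) y t := by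
    simp only [pdY, hss]
    exact deriv_const_mul_field _
  have hWyy : pdYY (fun x y t =>
          Real.exp (b * ε * Real.exp (b * t / 2) *
              (4 * Real.sqrt x - ε * Real.exp (b * t / 2)) / 2) *
            u ((2 * Real.sqrt x - ε * Real.exp (b * t / 2)) ^ 2 / 4) y t) (s ^ 2) y t = (Real.exp (b * ε * Real.exp (b * t / 2) * (4 * s - ε * Real.exp (b * t / 2)) / 2)) * pdYY u ((2 * s - ε * Real.exp (b * t / 2)) ^ 2 / 4) y t := by
    simp only [pdYY, pdY, hss, deriv_const_mul_field]
  -- pdT of the transformed function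
  have hWt : pdT (fun x y t =>
          Real.exp (b * ε * Real.exp (b * t / 2) *
              (4 * Real.sqrt x - ε * Real.exp (b * t / 2)) / 2) *
            u ((2 * Real.sqrt x - ε * Real.exp (b * t / 2)) ^ 2 / 4) y t) (s ^ 2) y t =
      (Real.exp (b * ε * Real.exp (b * t / 2) * (4 * s - ε * Real.exp (b * t / 2)) / 2)) * (b ^ 2 * (ε * Real.exp (b * t / 2)) * (2 * s - (ε * Real.exp (b * t / 2))) / 2 * (u ((2 * s - ε * Real.exp (b * t / 2)) ^ 2 / 4) y t) +
        (-(b * (ε * Real.exp (b * t / 2)) * (2 * s - (ε * Real.exp (b * t / 2)))) / 4 * (fderiv ℝ (fun p : ℝ × ℝ × ℝ => u p.1 p.2.1 p.2.2) (((2 * s - ε * Real.exp (b * t / 2)) ^ 2 / 4), y, t) ((1:ℝ),(0:ℝ),(0:ℝ))) + (fderiv ℝ (fun p : ℝ × ℝ × ℝ => u p.1 p.2.1 p.2.2) (((2 * s - ε * Real.exp (b * t / 2)) ^ 2 / 4), y, t) ((0:ℝ),(0:ℝ),(1:ℝ))))) := by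
    have hE1 : HasDerivAt (fun τ => Real.exp (b * τ / 2))
        (Real.exp (b * t / 2) * (b * 1 / 2)) t :=
      (((hasDerivAt_id' t).const_mul b).div_const 2).exp
    have hc : HasDerivAt (fun τ => ε * Real.exp (b * τ / 2))
        (ε * (Real.exp (b * t / 2) * (b * 1 / 2))) t := hE1.const_mul ε
    have hbe : HasDerivAt (fun τ => b * ε * Real.exp (b * τ / 2))
        (b * ε * (Real.exp (b * t / 2) * (b * 1 / 2))) t := hE1.const_mul (b * ε)
    have hGt := (hbe.fun_mul (hc.const_sub (4 * Real.sqrt (s ^ 2)))).div_const 2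
    have hphit := ((hc.const_sub (2 * Real.sqrt (s ^ 2))).fun_pow 2).div_const 4
    have h3t := ls_comp_curve (hdiffU _ hqmem)
      (hphit.prodMk ((hasDerivAt_const t y).prodMk (hasDerivAt_id' t)))
      (by simp only [Real.sqrt_sq hs.le])
    rw [ls_lin2] at h3t
    have H := hGt.exp.fun_mul h3t
    simp only [pdT]
    convert H.deriv using 1
    simp only [Real.sqrt_sq hs.le]
    ring
  -- pdXX of the transformed function
  have hWxx : pdXX (fun x y t =>
          Real.exp (b * ε * Real.exp (b * t / 2) *
              (4 * Real.sqrt x - ε * Real.exp (b * t / 2)) / 2) *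
            u ((2 * Real.sqrt x - ε * Real.exp (b * t / 2)) ^ 2 / 4) y t) (s ^ 2) y t =
      (Real.exp (b * ε * Real.exp (b * t / 2) * (4 * s - ε * Real.exp (b * t / 2)) / 2)) * ((b * (ε * Real.exp (b * t / 2)) / s) ^ 2 * (u ((2 * s - ε * Real.exp (b * t / 2)) ^ 2 / 4) y t) + b * (ε * Real.exp (b * t / 2)) / s * ((2 * s - (ε * Real.exp (b * t / 2))) / (2 * s)) * (fderiv ℝ (fun p : ℝ × ℝ × ℝ => u p.1 p.2.1 p.2.2) (((2 * s - ε * Real.exp (b * t / 2)) ^ 2 / 4), y, t) ((1:ℝ),(0:ℝ),(0:ℝ))) +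
        (-(b * (ε * Real.exp (b * t / 2))) / (2 * s ^ 3)) * (u ((2 * s - ε * Real.exp (b * t / 2)) ^ 2 / 4) y t) + b * (ε * Real.exp (b * t / 2)) / s * ((2 * s - (ε * Real.exp (b * t / 2))) / (2 * s)) * (fderiv ℝ (fun p : ℝ × ℝ × ℝ => u p.1 p.2.1 p.2.2) (((2 * s - ε * Real.exp (b * t / 2)) ^ 2 / 4), y, t) ((1:ℝ),(0:ℝ),(0:ℝ))) +
        (ε * Real.exp (b * t / 2)) / (4 * s ^ 3) * (fderiv ℝ (fun p : ℝ × ℝ × ℝ => u p.1 p.2.1 p.2.2) (((2 * s - ε * Real.exp (b * t / 2)) ^ 2 / 4), y, t) ((1:ℝ),(0:ℝ),(0:ℝ))) + ((2 * s - (ε * Real.exp (b * t / 2))) / (2 * s)) ^ 2 * (fderiv ℝ (fderiv ℝ (fun p : ℝ × ℝ × ℝ => u p.1 p.2.1 p.2.2)) (((2 * s - ε * Real.exp (b * t / 2)) ^ 2 / 4), y, t) ((1:ℝ),(0:ℝ),(0:ℝ)) ((1:ℝ),(0:ℝ),(0:ℝ)))) := by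
    have hev : (fun z => pdX (fun x y t =>
          Real.exp (b * ε * Real.exp (b * t / 2) *
              (4 * Real.sqrt x - ε * Real.exp (b * t / 2)) / 2) *
            u ((2 * Real.sqrt x - ε * Real.exp (b * t / 2)) ^ 2 / 4) y t) z y t) =ᶠ[nhds (s ^ 2)]
        (fun z => Real.exp (b * ε * Real.exp (b * t / 2) *
            (4 * Real.sqrt z - ε * Real.exp (b * t / 2)) / 2) *
          (b * ε * Real.exp (b * t / 2) / Real.sqrt z *
              u ((2 * Real.sqrt z - ε * Real.exp (b * t / 2)) ^ 2 / 4) y t +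
            (2 * Real.sqrt z - ε * Real.exp (b * t / 2)) / (2 * Real.sqrt z) *
              fderiv ℝ (fun p : ℝ × ℝ × ℝ => u p.1 p.2.1 p.2.2) (((2 * Real.sqrt z - ε * Real.exp (b * t / 2)) ^ 2 / 4), y, t)
                ((1:ℝ),(0:ℝ),(0:ℝ)))) := by
      have hopen : IsOpen {z : ℝ | 0 < z ∧ ε * Real.exp (b * t / 2) < 2 * Real.sqrt z} :=
        (isOpen_lt continuous_const continuous_id).and
          (isOpen_lt continuous_const (continuous_const.mul Real.continuous_sqrt))
      filter_upwards [hopen.mem_nhds ⟨pow_pos hs 2, by rw [hss]; exact hr⟩] with z hz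
      simpa only [pdX] using (hmain z hz.1 hz.2).deriv
    simp only [pdXX]
    rw [hev.deriv_eq]
    have hsqx : HasDerivAt Real.sqrt (1 / (2 * Real.sqrt (s ^ 2))) (s ^ 2) :=
      Real.hasDerivAt_sqrt (pow_ne_zero 2 hs.ne')
    have hsqne : Real.sqrt (s ^ 2) ≠ 0 := by rw [hss]; exact hs.ne'
    have hGe := (((((hsqx.const_mul 4).sub_const
      (ε * Real.exp (b * t / 2))).const_mul (b * ε * Real.exp (b * t / 2))).div_const 2)).exp
    have hP := (hasDerivAt_const (s ^ 2) (b * ε * Real.exp (b * t / 2))).fun_div hsqx hsqne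
    have hQ := ((hsqx.const_mul 2).sub_const (ε * Real.exp (b * t / 2))).fun_div (hsqx.const_mul 2)
      (by rw [hss]; exact mul_ne_zero two_ne_zero hs.ne')
    have hphix := (((hsqx.const_mul 2).sub_const (ε * Real.exp (b * t / 2))).fun_pow 2).div_const 4
    have hgam := hphix.prodMk ((hasDerivAt_const (s ^ 2) y).prodMk (hasDerivAt_const (s ^ 2) t))
    have hu1 := ls_comp_curve (hdiffU _ hqmem) hgam (by simp only [Real.sqrt_sq hs.le])
    rw [ls_lin1] at hu1
    have hR := ls_comp_curve2 (hdiffF _ hqmem) hgam (by simp only [Real.sqrt_sq hs.le])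
      ((1:ℝ),(0:ℝ),(0:ℝ))
    rw [ls_lin1'] at hR
    have H := hGe.fun_mul ((hP.fun_mul hu1).fun_add (hQ.fun_mul hR))
    convert H.deriv using 1
    simp only [Real.sqrt_sq hs.le]
    push_cast
    field_simp
    ring
  -- conclude
  simp only [LSEq]
  rw [hWt, hWx, hWy, hWxx, hWyy, hPDE]
  field_simp
  ring
end

section
/- Assume d = 1/4 (with a, b, e ∈ ℝ arbitrary). Let u be a solution of the Longstaff–Schwartz equation on Ω, and let ε ∈ ℝ. Then the function w(x,y,t) = exp( (e·ε·e^{et/2} · (4√y − ε·e^{et/2}))/2 ) · u( x, (2√y − ε·e^{et/2})²/4, t ) satisfies the Longstaff–Schwartz equation at every point (x,y,t) ∈ Ω with 2√y > ε·e^{et/2}. -/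
variable {u : ℝ → ℝ → ℝ → ℝ}

lemma LS_sliceY (hC : ContDiffOn ℝ 2 (fun p : ℝ × ℝ × ℝ => u p.1 p.2.1 p.2.2) Omega)
    {x t : ℝ} (hx : 0 < x) :
    ContDiffOn ℝ 2 (fun z => u x z t) (Set.Ioi 0) := by
  have hmap : ContDiff ℝ 2 (fun z : ℝ => ((x, z, t) : ℝ × ℝ × ℝ)) :=
    contDiff_const.prodMk (contDiff_id.prodMk contDiff_const)
  exact hC.comp hmap.contDiffOn fun z hz => ⟨hx, hz⟩

lemma LS_sliceYT (hC : ContDiffOn ℝ 2 (fun p : ℝ × ℝ × ℝ => u p.1 p.2.1 p.2.2) Omega)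
    {x : ℝ} (hx : 0 < x) :
    ContDiffOn ℝ 2 (fun p : ℝ × ℝ => u x p.1 p.2) {p : ℝ × ℝ | 0 < p.1} := by
  have hmap : ContDiff ℝ 2 (fun p : ℝ × ℝ => ((x, p.1, p.2) : ℝ × ℝ × ℝ)) :=
    contDiff_const.prodMk contDiff_id
  exact hC.comp hmap.contDiffOn fun p hp => ⟨hx, hp⟩

lemma LS_hasDerivY (hC : ContDiffOn ℝ 2 (fun p : ℝ × ℝ × ℝ => u p.1 p.2.1 p.2.2) Omega)
    {x y t : ℝ} (hx : 0 < x) (hy : 0 < y) :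
    HasDerivAt (fun z => u x z t) (pdY u x y t) y := by
  have h := ((LS_sliceY hC (t := t) hx).differentiableOn two_ne_zero).differentiableAt
    (isOpen_Ioi.mem_nhds hy)
  exact h.hasDerivAt

lemma LS_hasDerivYY (hC : ContDiffOn ℝ 2 (fun p : ℝ × ℝ × ℝ => u p.1 p.2.1 p.2.2) Omega)
    {x y t : ℝ} (hx : 0 < x) (hy : 0 < y) :
    HasDerivAt (fun z => pdY u x z t) (pdYY u x y t) y := by
  have h2 : ContDiffOn ℝ 1 (deriv fun z => u x z t) (Set.Ioi 0) :=
    (LS_sliceY hC (t := t) hx).deriv_of_isOpen isOpen_Ioi (by norm_num)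
  have h := (h2.differentiableOn one_ne_zero).differentiableAt (isOpen_Ioi.mem_nhds hy)
  exact h.hasDerivAt

lemma LS_comp_YT (hC : ContDiffOn ℝ 2 (fun p : ℝ × ℝ × ℝ => u p.1 p.2.1 p.2.2) Omega)
    {x y t : ℝ} (hx : 0 < x) (hy : 0 < y)
    {g h : ℝ → ℝ} {g' h' τ : ℝ} (hg : HasDerivAt g g' τ) (hh : HasDerivAt h h' τ)
    (hgy : g τ = y) (hht : h τ = t) :
    HasDerivAt (fun z => u x (g z) (h z)) (g' * pdY u x y t + h' * pdT u x y t) τ := by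
  have hF : DifferentiableAt ℝ (fun p : ℝ × ℝ => u x p.1 p.2) (y, t) := by
    have h1 := (LS_sliceYT hC hx).differentiableOn two_ne_zero
    exact h1.differentiableAt ((isOpen_Ioi.preimage continuous_fst).mem_nhds hy)
  set L := fderiv ℝ (fun p : ℝ × ℝ => u x p.1 p.2) (y, t) with hL
  have h10 : HasDerivAt (fun z => u x z t) (L (1, 0)) y := by
    have hc : HasDerivAt (fun z : ℝ => ((z, t) : ℝ × ℝ)) (1, 0) y :=
      (hasDerivAt_id y).prodMk (hasDerivAt_const y t)
    exact hF.hasFDerivAt.comp_hasDerivAt y hc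
  have h01 : HasDerivAt (fun z => u x y z) (L (0, 1)) t := by
    have hc : HasDerivAt (fun z : ℝ => ((y, z) : ℝ × ℝ)) (0, 1) t :=
      (hasDerivAt_const t y).prodMk (hasDerivAt_id t)
    exact hF.hasFDerivAt.comp_hasDerivAt t hc
  have hY : pdY u x y t = L (1, 0) := h10.deriv
  have hT : pdT u x y t = L (0, 1) := h01.deriv
  have hcurve : HasDerivAt (fun z => ((g z, h z) : ℝ × ℝ)) (g', h') τ := hg.prodMk hh
  have hcomp : HasDerivAt (fun z => u x (g z) (h z)) (L (g', h')) τ := by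
    have := hF.hasFDerivAt.comp_hasDerivAt_of_eq τ hcurve (by rw [hgy, hht])
    exact this
  have hval : L (g', h') = g' * pdY u x y t + h' * pdT u x y t := by
    have hsplit : ((g', h') : ℝ × ℝ) = g' • ((1 : ℝ), (0 : ℝ)) + h' • ((0 : ℝ), (1 : ℝ)) := by
      simp [Prod.ext_iff]
    rw [hsplit, map_add, map_smul, map_smul, ← hY, ← hT, smul_eq_mul, smul_eq_mul]
  rwa [hval] at hcomp


set_option maxHeartbeats 3000000 in
/-- Symmetry of the Longstaff–Schwartz equation when `d = 1/4` (subcase 4.1, group `G₃`). -/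
theorem ls_symmetry_d_quarter_exp (a b d e : ℝ) (hd : d = 1 / 4)
    (u : ℝ → ℝ → ℝ → ℝ) (hu : IsLSSolution a b d e u) (ε : ℝ) :
    ∀ x y t : ℝ, 0 < x → 0 < y → 2 * Real.sqrt y > ε * Real.exp (e * t / 2) →
      LSEq a b d e
        (fun x y t =>
          Real.exp (e * ε * Real.exp (e * t / 2) *
              (4 * Real.sqrt y - ε * Real.exp (e * t / 2)) / 2) *
            u x ((2 * Real.sqrt y - ε * Real.exp (e * t / 2)) ^ 2 / 4) t)
        x y t := by
  obtain ⟨hC, hLS⟩ := hu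
  intro x y t hx hy hgt
  subst hd
  obtain ⟨r, hr, rfl⟩ : ∃ r : ℝ, 0 < r ∧ y = r ^ 2 :=
    ⟨Real.sqrt y, Real.sqrt_pos.mpr hy, (Real.sq_sqrt hy.le).symm⟩
  have hsq : Real.sqrt (r ^ 2) = r := Real.sqrt_sq hr.le
  have hgt' : ε * Real.exp (e * t / 2) < 2 * r := by rwa [hsq] at hgt
  have hr2 : (0:ℝ) < r ^ 2 := pow_pos hr 2
  have hY0pos : (0:ℝ) < ((2 * r - ε * Real.exp (e * t / 2)) ^ 2 / 4) :=
    div_pos (pow_pos (by linarith) 2) four_pos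
  have hY0R : (0:ℝ) < ((2 * Real.sqrt (r ^ 2) - ε * Real.exp (e * t / 2)) ^ 2 / 4) := by rw [hsq]; exact hY0pos
  -- y-direction derivative, at a general point z
  have hYd : ∀ z : ℝ, 0 < z → ε * Real.exp (e * t / 2) < 2 * Real.sqrt z →
      HasDerivAt (fun w => Real.exp (e * ε * Real.exp (e * t / 2) * (4 * Real.sqrt w - ε * Real.exp (e * t / 2)) / 2) * u x ((2 * Real.sqrt w - ε * Real.exp (e * t / 2)) ^ 2 / 4) t) (Real.exp (e * ε * Real.exp (e * t / 2) * (4 * Real.sqrt z - ε * Real.exp (e * t / 2)) / 2) * (e * ε * Real.exp (e * t / 2) / Real.sqrt z * u x ((2 * Real.sqrt z - ε * Real.exp (e * t / 2)) ^ 2 / 4) t + pdY u x ((2 * Real.sqrt z - ε * Real.exp (e * t / 2)) ^ 2 / 4) t * ((2 * Real.sqrt z - ε * Real.exp (e * t / 2)) / (2 * Real.sqrt z)))) z := by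
    intro z hz hz2
    have hsz : 0 < Real.sqrt z := Real.sqrt_pos.mpr hz
    have hmz : (0:ℝ) < (2 * Real.sqrt z - ε * Real.exp (e * t / 2)) ^ 2 / 4 := div_pos (pow_pos (by linarith) 2) four_pos
    have h1 : HasDerivAt (fun w : ℝ => Real.sqrt w) (1 / (2 * Real.sqrt z)) z :=
      Real.hasDerivAt_sqrt hz.ne'
    have hPhi : HasDerivAt (fun w => e * ε * Real.exp (e * t / 2) * (4 * Real.sqrt w - ε * Real.exp (e * t / 2)) / 2)
        (e * ε * Real.exp (e * t / 2) * (4 * (1 / (2 * Real.sqrt z))) / 2) z :=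
      (((h1.const_mul 4).sub_const (ε * Real.exp (e * t / 2))).const_mul (e * ε * Real.exp (e * t / 2))).div_const 2
    have hE := hPhi.exp
    have hPsi : HasDerivAt (fun w => (2 * Real.sqrt w - ε * Real.exp (e * t / 2)) ^ 2 / 4)
        ((2 : ℕ) * (2 * Real.sqrt z - ε * Real.exp (e * t / 2)) ^ (2 - 1) * (2 * (1 / (2 * Real.sqrt z))) / 4) z :=
      (((h1.const_mul 2).sub_const (ε * Real.exp (e * t / 2))).pow 2).div_const 4
    have hu1 : HasDerivAt (fun v => u x v t) (pdY u x ((2 * Real.sqrt z - ε * Real.exp (e * t / 2)) ^ 2 / 4) t) ((2 * Real.sqrt z - ε * Real.exp (e * t / 2)) ^ 2 / 4) :=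
      LS_hasDerivY hC hx hmz
    have hu2 := hu1.comp z hPsi
    exact (hE.mul hu2).congr_deriv (by simp only [Function.comp_apply, Pi.add_apply, Pi.mul_apply, Pi.div_apply]; push_cast; field_simp; ring)
  -- pdX
  have hPX : pdX (fun x y t =>
          Real.exp (e * ε * Real.exp (e * t / 2) *
              (4 * Real.sqrt y - ε * Real.exp (e * t / 2)) / 2) *
            u x ((2 * Real.sqrt y - ε * Real.exp (e * t / 2)) ^ 2 / 4) t) x (r ^ 2) t = Real.exp (e * ε * Real.exp (e * t / 2) * (4 * r - ε * Real.exp (e * t / 2)) / 2) * pdX u x ((2 * r - ε * Real.exp (e * t / 2)) ^ 2 / 4) t := by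
    have h : pdX (fun x y t =>
          Real.exp (e * ε * Real.exp (e * t / 2) *
              (4 * Real.sqrt y - ε * Real.exp (e * t / 2)) / 2) *
            u x ((2 * Real.sqrt y - ε * Real.exp (e * t / 2)) ^ 2 / 4) t) x (r ^ 2) t = Real.exp (e * ε * Real.exp (e * t / 2) * (4 * Real.sqrt (r ^ 2) - ε * Real.exp (e * t / 2)) / 2) * pdX u x ((2 * Real.sqrt (r ^ 2) - ε * Real.exp (e * t / 2)) ^ 2 / 4) t := deriv_const_mul_field _
    rwa [hsq] at h
  -- pdXX
  have hPXX : pdXX (fun x y t =>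
          Real.exp (e * ε * Real.exp (e * t / 2) *
              (4 * Real.sqrt y - ε * Real.exp (e * t / 2)) / 2) *
            u x ((2 * Real.sqrt y - ε * Real.exp (e * t / 2)) ^ 2 / 4) t) x (r ^ 2) t = Real.exp (e * ε * Real.exp (e * t / 2) * (4 * r - ε * Real.exp (e * t / 2)) / 2) * pdXX u x ((2 * r - ε * Real.exp (e * t / 2)) ^ 2 / 4) t := by
    have h1 : (fun z => pdX (fun x y t =>
          Real.exp (e * ε * Real.exp (e * t / 2) *
              (4 * Real.sqrt y - ε * Real.exp (e * t / 2)) / 2) *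
            u x ((2 * Real.sqrt y - ε * Real.exp (e * t / 2)) ^ 2 / 4) t) z (r ^ 2) t) = fun z => Real.exp (e * ε * Real.exp (e * t / 2) * (4 * Real.sqrt (r ^ 2) - ε * Real.exp (e * t / 2)) / 2) * pdX u z ((2 * Real.sqrt (r ^ 2) - ε * Real.exp (e * t / 2)) ^ 2 / 4) t :=
      funext fun z => deriv_const_mul_field _
    have h : pdXX (fun x y t =>
          Real.exp (e * ε * Real.exp (e * t / 2) *
              (4 * Real.sqrt y - ε * Real.exp (e * t / 2)) / 2) *
            u x ((2 * Real.sqrt y - ε * Real.exp (e * t / 2)) ^ 2 / 4) t) x (r ^ 2) t = Real.exp (e * ε * Real.exp (e * t / 2) * (4 * Real.sqrt (r ^ 2) - ε * Real.exp (e * t / 2)) / 2) * pdXX u x ((2 * Real.sqrt (r ^ 2) - ε * Real.exp (e * t / 2)) ^ 2 / 4) t := by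
      show deriv (fun z => pdX (fun x y t =>
          Real.exp (e * ε * Real.exp (e * t / 2) *
              (4 * Real.sqrt y - ε * Real.exp (e * t / 2)) / 2) *
            u x ((2 * Real.sqrt y - ε * Real.exp (e * t / 2)) ^ 2 / 4) t) z (r ^ 2) t) x = _
      rw [h1]
      exact deriv_const_mul_field _
    rwa [hsq] at h
  -- pdY
  have hPY : pdY (fun x y t =>
          Real.exp (e * ε * Real.exp (e * t / 2) *
              (4 * Real.sqrt y - ε * Real.exp (e * t / 2)) / 2) *
            u x ((2 * Real.sqrt y - ε * Real.exp (e * t / 2)) ^ 2 / 4) t) x (r ^ 2) t = Real.exp (e * ε * Real.exp (e * t / 2) * (4 * r - ε * Real.exp (e * t / 2)) / 2) * (e * ε * Real.exp (e * t / 2) / r * u x ((2 * r - ε * Real.exp (e * t / 2)) ^ 2 / 4) t + pdY u x ((2 * r - ε * Real.exp (e * t / 2)) ^ 2 / 4) t * ((2 * r - ε * Real.exp (e * t / 2)) / (2 * r))) := by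
    have h : pdY (fun x y t =>
          Real.exp (e * ε * Real.exp (e * t / 2) *
              (4 * Real.sqrt y - ε * Real.exp (e * t / 2)) / 2) *
            u x ((2 * Real.sqrt y - ε * Real.exp (e * t / 2)) ^ 2 / 4) t) x (r ^ 2) t = Real.exp (e * ε * Real.exp (e * t / 2) * (4 * Real.sqrt (r ^ 2) - ε * Real.exp (e * t / 2)) / 2) * (e * ε * Real.exp (e * t / 2) / Real.sqrt (r ^ 2) * u x ((2 * Real.sqrt (r ^ 2) - ε * Real.exp (e * t / 2)) ^ 2 / 4) t + pdY u x ((2 * Real.sqrt (r ^ 2) - ε * Real.exp (e * t / 2)) ^ 2 / 4) t * ((2 * Real.sqrt (r ^ 2) - ε * Real.exp (e * t / 2)) / (2 * Real.sqrt (r ^ 2)))) :=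
      (hYd (r ^ 2) hr2 hgt).deriv
    rwa [hsq] at h
  -- pdYY
  have hPYY : pdYY (fun x y t =>
          Real.exp (e * ε * Real.exp (e * t / 2) *
              (4 * Real.sqrt y - ε * Real.exp (e * t / 2)) / 2) *
            u x ((2 * Real.sqrt y - ε * Real.exp (e * t / 2)) ^ 2 / 4) t) x (r ^ 2) t = Real.exp (e * ε * Real.exp (e * t / 2) * (4 * r - ε * Real.exp (e * t / 2)) / 2) * (e * ε * Real.exp (e * t / 2) / r) * (e * ε * Real.exp (e * t / 2) / r * u x ((2 * r - ε * Real.exp (e * t / 2)) ^ 2 / 4) t + pdY u x ((2 * r - ε * Real.exp (e * t / 2)) ^ 2 / 4) t * ((2 * r - ε * Real.exp (e * t / 2)) / (2 * r))) + Real.exp (e * ε * Real.exp (e * t / 2) * (4 * r - ε * Real.exp (e * t / 2)) / 2) * (-(e * ε * Real.exp (e * t / 2)) / (2 * r ^ 3) * u x ((2 * r - ε * Real.exp (e * t / 2)) ^ 2 / 4) t + e * ε * Real.exp (e * t / 2) / r * pdY u x ((2 * r - ε * Real.exp (e * t / 2)) ^ 2 / 4) t * ((2 * r - ε * Real.exp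 (e * t / 2)) / (2 * r)) + pdYY u x ((2 * r - ε * Real.exp (e * t / 2)) ^ 2 / 4) t * ((2 * r - ε * Real.exp (e * t / 2)) / (2 * r)) ^ 2 + pdY u x ((2 * r - ε * Real.exp (e * t / 2)) ^ 2 / 4) t * (ε * Real.exp (e * t / 2) / (4 * r ^ 3))) := by
    have hev : (fun z => pdY (fun x y t =>
          Real.exp (e * ε * Real.exp (e * t / 2) *
              (4 * Real.sqrt y - ε * Real.exp (e * t / 2)) / 2) *
            u x ((2 * Real.sqrt y - ε * Real.exp (e * t / 2)) ^ 2 / 4) t) x z t) =ᶠ[nhds (r ^ 2)] (fun z => Real.exp (e * ε * Real.exp (e * t / 2) * (4 * Real.sqrt z - ε * Real.exp (e * t / 2)) / 2) * (e * ε * Real.exp (e * t / 2) / Real.sqrt z * u x ((2 * Real.sqrt z - ε * Real.exp (e * t / 2)) ^ 2 / 4) t + pdY u x ((2 * Real.sqrt z - ε * Real.exp (e * t / 2)) ^ 2 / 4) t * ((2 * Real.sqrt z - ε * Real.exp (e * t / 2)) / (2 * Real.sqrt z)))) := by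
      have hV : IsOpen {z : ℝ | 0 < z ∧ ε * Real.exp (e * t / 2) < 2 * Real.sqrt z} :=
        (isOpen_lt continuous_const continuous_id).inter
          (isOpen_lt continuous_const (continuous_const.mul Real.continuous_sqrt))
      filter_upwards [hV.mem_nhds ⟨hr2, hgt⟩] with z hz
      exact (hYd z hz.1 hz.2).deriv
    have hsz : 0 < Real.sqrt (r ^ 2) := Real.sqrt_pos.mpr hr2
    have hne : Real.sqrt (r ^ 2) ≠ 0 := hsz.ne'
    have hmz : (0:ℝ) < (2 * Real.sqrt (r ^ 2) - ε * Real.exp (e * t / 2)) ^ 2 / 4 := hY0R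
    have h1 : HasDerivAt (fun w : ℝ => Real.sqrt w) (1 / (2 * Real.sqrt (r ^ 2))) (r ^ 2) :=
      Real.hasDerivAt_sqrt hr2.ne'
    have hPhi : HasDerivAt (fun w => e * ε * Real.exp (e * t / 2) * (4 * Real.sqrt w - ε * Real.exp (e * t / 2)) / 2)
        (e * ε * Real.exp (e * t / 2) * (4 * (1 / (2 * Real.sqrt (r ^ 2)))) / 2) (r ^ 2) :=
      (((h1.const_mul 4).sub_const (ε * Real.exp (e * t / 2))).const_mul (e * ε * Real.exp (e * t / 2))).div_const 2
    have hE := hPhi.exp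
    have hPsi : HasDerivAt (fun w => (2 * Real.sqrt w - ε * Real.exp (e * t / 2)) ^ 2 / 4)
        ((2 : ℕ) * (2 * Real.sqrt (r ^ 2) - ε * Real.exp (e * t / 2)) ^ (2 - 1) * (2 * (1 / (2 * Real.sqrt (r ^ 2)))) / 4) (r ^ 2) :=
      (((h1.const_mul 2).sub_const (ε * Real.exp (e * t / 2))).pow 2).div_const 4
    have hq := (hasDerivAt_const (r ^ 2) (e * ε * Real.exp (e * t / 2))).div h1 hne
    have hu1 : HasDerivAt (fun v => u x v t) (pdY u x ((2 * Real.sqrt (r ^ 2) - ε * Real.exp (e * t / 2)) ^ 2 / 4) t) ((2 * Real.sqrt (r ^ 2) - ε * Real.exp (e * t / 2)) ^ 2 / 4) :=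
      LS_hasDerivY hC hx hmz
    have hu2 := hu1.comp (r ^ 2) hPsi
    have hterm1 := hq.mul hu2
    have hpdY1 : HasDerivAt (fun v => pdY u x v t) (pdYY u x ((2 * Real.sqrt (r ^ 2) - ε * Real.exp (e * t / 2)) ^ 2 / 4) t) ((2 * Real.sqrt (r ^ 2) - ε * Real.exp (e * t / 2)) ^ 2 / 4) :=
      LS_hasDerivYY hC hx hmz
    have hpdY2 := hpdY1.comp (r ^ 2) hPsi
    have h2ne : 2 * Real.sqrt (r ^ 2) ≠ 0 := by positivity
    have hfrac := ((h1.const_mul 2).sub_const (ε * Real.exp (e * t / 2))).div (h1.const_mul 2) h2ne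
    have hterm2 := hpdY2.mul hfrac
    have hGd : HasDerivAt (fun z => Real.exp (e * ε * Real.exp (e * t / 2) * (4 * Real.sqrt z - ε * Real.exp (e * t / 2)) / 2) * (e * ε * Real.exp (e * t / 2) / Real.sqrt z * u x ((2 * Real.sqrt z - ε * Real.exp (e * t / 2)) ^ 2 / 4) t + pdY u x ((2 * Real.sqrt z - ε * Real.exp (e * t / 2)) ^ 2 / 4) t * ((2 * Real.sqrt z - ε * Real.exp (e * t / 2)) / (2 * Real.sqrt z)))) (Real.exp (e * ε * Real.exp (e * t / 2) * (4 * Real.sqrt (r ^ 2) - ε * Real.exp (e * t / 2)) / 2) * (e * ε * Real.exp (e * t / 2) / Real.sqrt (r ^ 2)) * (e * ε * Real.exp (e * t / 2) / Real.sqrt (r ^ 2) * u x ((2 * Real.sqrt (r ^ 2) - ε * Real.exp (e * t / 2)) ^ 2 / 4) t + pdY u x ((2 * Real.sqrt (r ^ 2) - ε * Real.exp (e * t / 2)) ^ 2 / 4) t * ((2 * Real.sqrt (r ^ 2) - ε * Real.exp (e * t / 2)) / (2 * Real.sqrt (r ^ 2)))) + Real.exp (e * ε * Real.exp (e * t / 2)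 * (4 * Real.sqrt (r ^ 2) - ε * Real.exp (e * t / 2)) / 2) * (-(e * ε * Real.exp (e * t / 2)) / (2 * Real.sqrt (r ^ 2) ^ 3) * u x ((2 * Real.sqrt (r ^ 2) - ε * Real.exp (e * t / 2)) ^ 2 / 4) t + e * ε * Real.exp (e * t / 2) / Real.sqrt (r ^ 2) * pdY u x ((2 * Real.sqrt (r ^ 2) - ε * Real.exp (e * t / 2)) ^ 2 / 4) t * ((2 * Real.sqrt (r ^ 2) - ε * Real.exp (e * t / 2)) / (2 * Real.sqrt (r ^ 2))) + pdYY u x ((2 * Real.sqrt (r ^ 2) - ε * Real.exp (e * t / 2)) ^ 2 / 4) t * ((2 * Real.sqrt (r ^ 2) - ε * Real.exp (e * t / 2)) / (2 * Real.sqrt (r ^ 2))) ^ 2 + pdY u x ((2 * Real.sqrt (r ^ 2) - ε * Real.exp (e * t / 2)) ^ 2 / 4) t * (ε * Real.exp (e * t / 2) / (4 * Real.sqrt (r ^ 2) ^ 3)))) (r ^ 2) :=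
      (hE.mul (hterm1.add hterm2)).congr_deriv (by simp only [Function.comp_apply, Pi.add_apply, Pi.mul_apply, Pi.div_apply]; push_cast; field_simp; ring)
    have h : pdYY (fun x y t =>
          Real.exp (e * ε * Real.exp (e * t / 2) *
              (4 * Real.sqrt y - ε * Real.exp (e * t / 2)) / 2) *
            u x ((2 * Real.sqrt y - ε * Real.exp (e * t / 2)) ^ 2 / 4) t) x (r ^ 2) t = Real.exp (e * ε * Real.exp (e * t / 2) * (4 * Real.sqrt (r ^ 2) - ε * Real.exp (e * t / 2)) / 2) * (e * ε * Real.exp (e * t / 2) / Real.sqrt (r ^ 2)) * (e * ε * Real.exp (e * t / 2) / Real.sqrt (r ^ 2) * u x ((2 * Real.sqrt (r ^ 2) - ε * Real.exp (e * t / 2)) ^ 2 / 4) t + pdY u x ((2 * Real.sqrt (r ^ 2) - ε * Real.exp (e * t / 2)) ^ 2 / 4) t * ((2 * Real.sqrt (r ^ 2) - ε * Real.exp (e * t / 2)) / (2 * Real.sqrt (r ^ 2)))) + Real.exp (e * ε * Real.exp (e * t / 2) * (4 * Real.sqrt (r ^ 2) - ε * Real.exp (e * t / 2)) / 2) * (-(e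 * ε * Real.exp (e * t / 2)) / (2 * Real.sqrt (r ^ 2) ^ 3) * u x ((2 * Real.sqrt (r ^ 2) - ε * Real.exp (e * t / 2)) ^ 2 / 4) t + e * ε * Real.exp (e * t / 2) / Real.sqrt (r ^ 2) * pdY u x ((2 * Real.sqrt (r ^ 2) - ε * Real.exp (e * t / 2)) ^ 2 / 4) t * ((2 * Real.sqrt (r ^ 2) - ε * Real.exp (e * t / 2)) / (2 * Real.sqrt (r ^ 2))) + pdYY u x ((2 * Real.sqrt (r ^ 2) - ε * Real.exp (e * t / 2)) ^ 2 / 4) t * ((2 * Real.sqrt (r ^ 2) - ε * Real.exp (e * t / 2)) / (2 * Real.sqrt (r ^ 2))) ^ 2 + pdY u x ((2 * Real.sqrt (r ^ 2) - ε * Real.exp (e * t / 2)) ^ 2 / 4) t * (ε * Real.exp (e * t / 2) / (4 * Real.sqrt (r ^ 2) ^ 3))) := by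
      show deriv (fun z => pdY (fun x y t =>
          Real.exp (e * ε * Real.exp (e * t / 2) *
              (4 * Real.sqrt y - ε * Real.exp (e * t / 2)) / 2) *
            u x ((2 * Real.sqrt y - ε * Real.exp (e * t / 2)) ^ 2 / 4) t) x z t) (r ^ 2) = _
      rw [hev.deriv_eq]
      exact hGd.deriv
    rwa [hsq] at h
  -- pdT
  have hPT : pdT (fun x y t =>
          Real.exp (e * ε * Real.exp (e * t / 2) *
              (4 * Real.sqrt y - ε * Real.exp (e * t / 2)) / 2) *
            u x ((2 * Real.sqrt y - ε * Real.exp (e * t / 2)) ^ 2 / 4) t) x (r ^ 2) t = Real.exp (e * ε * Real.exp (e * t / 2) * (4 * r - ε * Real.exp (e * t / 2)) / 2) * (e ^ 2 / 2 * (ε * Real.exp (e * t / 2)) * (2 * r - ε * Real.exp (e * t / 2))) * u x ((2 * r - ε * Real.exp (e * t / 2)) ^ 2 / 4) t + Real.exp (e * ε * Real.exp (e * t / 2) * (4 * r - ε * Real.exp (e * t / 2)) / 2) * (-(e / 4) * (ε * Real.exp (e * t / 2)) * (2 * r - ε * Real.exp (e * t / 2)) * pdY u x ((2 * r - ε * Real.exp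 (e * t / 2)) ^ 2 / 4) t + pdT u x ((2 * r - ε * Real.exp (e * t / 2)) ^ 2 / 4) t) := by
    have hsig : HasDerivAt (fun z => Real.exp (e * z / 2)) (Real.exp (e * t / 2) * (e * 1 / 2)) t :=
      (((hasDerivAt_id t).const_mul e).div_const 2).exp
    have hS := hsig.const_mul ε
    have hA := hsig.const_mul (e * ε)
    have hB := hS.const_sub (4 * Real.sqrt (r ^ 2))
    have hPhiT := (hA.mul hB).div_const 2
    have hET := hPhiT.exp
    have hPsiT := ((hS.const_sub (2 * Real.sqrt (r ^ 2))).pow 2).div_const 4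
    have hUT := LS_comp_YT (t := t) hC hx hY0R hPsiT (hasDerivAt_id t) rfl rfl
    have hfinal : HasDerivAt (fun z => Real.exp (e * ε * Real.exp (e * z / 2) * (4 * Real.sqrt (r ^ 2) - ε * Real.exp (e * z / 2)) / 2) * u x ((2 * Real.sqrt (r ^ 2) - ε * Real.exp (e * z / 2)) ^ 2 / 4) z) (Real.exp (e * ε * Real.exp (e * t / 2) * (4 * Real.sqrt (r ^ 2) - ε * Real.exp (e * t / 2)) / 2) * (e ^ 2 / 2 * (ε * Real.exp (e * t / 2)) * (2 * Real.sqrt (r ^ 2) - ε * Real.exp (e * t / 2))) * u x ((2 * Real.sqrt (r ^ 2) - ε * Real.exp (e * t / 2)) ^ 2 / 4) t + Real.exp (e * ε * Real.exp (e * t / 2) * (4 * Real.sqrt (r ^ 2) - ε * Real.exp (e * t / 2)) / 2) * (-(e / 4) * (ε * Real.exp (e * t / 2)) * (2 * Real.sqrt (r ^ 2) - ε * Real.exp (e * t / 2)) * pdY u x ((2 * Real.sqrt (r ^ 2) - ε * Real.exp (e * t / 2)) ^ 2 / 4) t + pdT u x ((2 * Real.sqrt (r ^ 2) - ε * Real.exp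 (e * t / 2)) ^ 2 / 4) t)) t :=
      (hET.mul hUT).congr_deriv (by simp only [id_eq, Pi.mul_apply, Pi.pow_apply]; push_cast; ring)
    have h : pdT (fun x y t =>
          Real.exp (e * ε * Real.exp (e * t / 2) *
              (4 * Real.sqrt y - ε * Real.exp (e * t / 2)) / 2) *
            u x ((2 * Real.sqrt y - ε * Real.exp (e * t / 2)) ^ 2 / 4) t) x (r ^ 2) t = Real.exp (e * ε * Real.exp (e * t / 2) * (4 * Real.sqrt (r ^ 2) - ε * Real.exp (e * t / 2)) / 2) * (e ^ 2 / 2 * (ε * Real.exp (e * t / 2)) * (2 * Real.sqrt (r ^ 2) - ε * Real.exp (e * t / 2))) * u x ((2 * Real.sqrt (r ^ 2) - ε * Real.exp (e * t / 2)) ^ 2 / 4) t + Real.exp (e * ε * Real.exp (e * t / 2) * (4 * Real.sqrt (r ^ 2) - ε * Real.exp (e * t / 2)) / 2) * (-(e / 4) * (ε * Real.exp (e * t / 2)) * (2 * Real.sqrt (r ^ 2) - ε * Real.exp (e * t / 2)) * pdY u x ((2 * Real.sqrt (r ^ 2) - ε * Real.exp (e * t / 2)) ^ 2 / 4) t + pdT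 u x ((2 * Real.sqrt (r ^ 2) - ε * Real.exp (e * t / 2)) ^ 2 / 4) t) := hfinal.deriv
    rwa [hsq] at h
  have hueq : pdT u x ((2 * r - ε * Real.exp (e * t / 2)) ^ 2 / 4) t =
      -((a - b * x) * pdX u x ((2 * r - ε * Real.exp (e * t / 2)) ^ 2 / 4) t + (1 / 4 - e * ((2 * r - ε * Real.exp (e * t / 2)) ^ 2 / 4)) * pdY u x ((2 * r - ε * Real.exp (e * t / 2)) ^ 2 / 4) t +
        x / 2 * pdXX u x ((2 * r - ε * Real.exp (e * t / 2)) ^ 2 / 4) t + ((2 * r - ε * Real.exp (e * t / 2)) ^ 2 / 4) / 2 * pdYY u x ((2 * r - ε * Real.exp (e * t / 2)) ^ 2 / 4) t) :=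
    hLS x ((2 * r - ε * Real.exp (e * t / 2)) ^ 2 / 4) t hx hY0pos
  simp only [LSEq]
  rw [hPT, hPX, hPXX, hPY, hPYY, hueq]
  have hrne : r ≠ 0 := hr.ne'
  field_simp
  ring
end
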